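/- Every complemented subspace X of a product Π_{t∈T} B_t of Banach spaces over an index set T is topologically isomorphic to a product Π_{j∈J} F_j, where each F_j is a complemented subspace of a countable subproduct Π_{t∈T_j} B_t with T_j ⊆ T countable. -/

import Mathlib

universe u

namespace CSP
variable {T : Type u} {B : T → Type u}
variable [∀ t, NormedAddCommGroup (B t)] [∀ t, NormedSpace ℝ (B t)]

open Classical in
noncomputable def mask (C : Set T) : (∀ t, B t) →L[ℝ] (∀ t, B t) where
  toFun x := fun t => if t ∈ C then x t else 0
  map_add' x y := by funext t; by_cases h : t ∈ C <;> simp [h]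
  map_smul' c x := by funext t; by_cases h : t ∈ C <;> simp [h]
  cont := continuous_pi fun t => by
    by_cases h : t ∈ C
    · simpa [h] using (continuous_apply t)
    · simpa [h] using (continuous_const : Continuous fun _ : ∀ t, B t => (0 : B t))

open Classical in
lemma mask_apply (C : Set T) (x : ∀ t, B t) (t : T) :
    mask C x t = if t ∈ C then x t else 0 := rfl

lemma findep {E : Type*} [NormedAddCommGroup E] [NormedSpace ℝ E]
    (f : (∀ t, B t) →L[ℝ] E) :
    ∃ I : Finset T, ∀ x : ∀ t, B t, (∀ t ∈ I, x t = 0) → f x = 0 := by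
  classical
  have h0 : f ⁻¹' Metric.ball 0 1 ∈ nhds (0 : ∀ t, B t) := by
    have := f.continuous.tendsto 0
    rw [map_zero] at this
    exact this (Metric.ball_mem_nhds 0 one_pos)
  rw [nhds_pi] at h0
  obtain ⟨I, hIfin, V, hV, hIV⟩ := Filter.mem_pi.mp h0
  refine ⟨hIfin.toFinset, fun x hx => ?_⟩
  have key : ∀ c : ℝ, ‖f (c • x)‖ < 1 := by
    intro c
    have hmem : (c • x) ∈ I.pi V := by
      intro t ht
      have : x t = 0 := hx t (hIfin.mem_toFinset.mpr ht)
      simp only [Pi.smul_apply, this, smul_zero]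
      exact mem_of_mem_nhds (hV t)
    have := hIV hmem
    simpa [Metric.mem_ball, dist_zero_right] using this
  by_contra hne
  have hpos : 0 < ‖f x‖ := by
    rcases lt_or_eq_of_le (norm_nonneg (f x)) with h | h
    · exact h
    · exact absurd (norm_eq_zero.mp h.symm) hne
  have := key (2 / ‖f x‖)
  rw [map_smul, norm_smul] at this
  have h2 : ‖(2 / ‖f x‖ : ℝ)‖ * ‖f x‖ = 2 := by
    rw [Real.norm_eq_abs, abs_of_pos (by positivity), div_mul_cancel₀]
    exact ne_of_gt hpos
  rw [h2] at this; linarith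

section Closure
variable (D : T → Finset T)

def cl (t : T) : Set T := {u | Relation.ReflTransGen (fun a b => b ∈ D a) t u}

lemma mem_cl_self (t : T) : t ∈ cl D t := Relation.ReflTransGen.refl

lemma cl_closed {t u v : T} (hu : u ∈ cl D t) (hv : v ∈ D u) : v ∈ cl D t :=
  Relation.ReflTransGen.tail hu hv

lemma cl_countable (t : T) : (cl D t).Countable := by
  classical
  let S : ℕ → Set T := fun n => Nat.rec {t} (fun _ s => ⋃ u ∈ s, (D u : Set T)) n
  have hSc : ∀ n, (S n).Countable := by
    intro n; induction n with
    | zero => exact Set.countable_singleton t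
    | succ n ih => exact Set.Countable.biUnion ih (fun u _ => (D u).countable_toSet)
  have hsub : cl D t ⊆ ⋃ n, S n := by
    intro u hu
    induction hu with
    | refl => exact Set.mem_iUnion.mpr ⟨0, rfl⟩
    | tail _ hbc ih =>
      obtain ⟨n, hn⟩ := Set.mem_iUnion.mp ih
      exact Set.mem_iUnion.mpr ⟨n + 1, Set.mem_biUnion hn hbc⟩
  exact (Set.countable_iUnion hSc).mono hsub

end Closure

section ExtRes
variable (C : Set T)

noncomputable def resC : (∀ t, B t) →L[ℝ] (∀ t : C, B (t : T)) :=
  ContinuousLinearMap.pi fun t : C => ContinuousLinearMap.proj (t : T)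

@[simp] lemma resC_apply (x : ∀ t, B t) (t : C) : resC C x t = x (t : T) := rfl

open Classical in
noncomputable def extC : (∀ t : C, B (t : T)) →L[ℝ] (∀ t, B t) where
  toFun y := fun t => if h : t ∈ C then y ⟨t, h⟩ else 0
  map_add' x y := by funext t; by_cases h : t ∈ C <;> simp [h]
  map_smul' c x := by funext t; by_cases h : t ∈ C <;> simp [h]
  cont := continuous_pi fun t => by
    by_cases h : t ∈ C
    · simpa [h] using (continuous_apply (⟨t, h⟩ : C))
    · simpa [h] using (continuous_const : Continuous fun _ : ∀ t : C, B (t : T) => (0 : B t))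

open Classical in
lemma extC_apply (y : ∀ t : C, B (t : T)) (t : T) :
    extC C y t = if h : t ∈ C then y ⟨t, h⟩ else 0 := rfl

lemma ext_res (x : ∀ t, B t) : extC C (resC C x) = mask C x := by
  classical
  funext t
  simp only [extC_apply, mask_apply]
  by_cases h : t ∈ C <;> simp [h]

@[simp] lemma res_ext (y : ∀ t : C, B (t : T)) : resC C (extC C y) = y := by
  funext t
  simp [extC_apply, t.2]

end ExtRes

lemma geomL (nn : (∀ t, B t) →L[ℝ] (∀ t, B t)) (m : ℕ) :
    ((1 + nn) * (∑ j ∈ Finset.range m, (-nn)^j)) = (1 - (-nn)^m) := by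
  induction m with
  | zero => simp
  | succ m ih =>
    rw [Finset.sum_range_succ, mul_add, ih]
    have h1 : ((1 + nn) * ((-nn)^m) : (∀ t, B t) →L[ℝ] (∀ t, B t)) = (-nn)^m + nn * (-nn)^m := by
      rw [add_mul, one_mul]
    have h2 : ((-nn)^(m+1) : (∀ t, B t) →L[ℝ] (∀ t, B t)) = -(nn * (-nn)^m) := by
      rw [pow_succ']; exact neg_mul nn ((-nn)^m)
    rw [h1, h2]; abel

lemma geomR (nn : (∀ t, B t) →L[ℝ] (∀ t, B t)) (m : ℕ) :
    ((∑ j ∈ Finset.range m, (-nn)^j) * (1 + nn)) = (1 - (-nn)^m) := by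
  induction m with
  | zero => simp
  | succ m ih =>
    rw [Finset.sum_range_succ, add_mul, ih]
    have h1 : (((-nn)^m) * (1 + nn) : (∀ t, B t) →L[ℝ] (∀ t, B t)) = (-nn)^m + (-nn)^m * nn := by
      rw [mul_add, mul_one]
    have h2 : ((-nn)^(m+1) : (∀ t, B t) →L[ℝ] (∀ t, B t)) = -((-nn)^m * nn) := by
      rw [pow_succ]; exact mul_neg ((-nn)^m) nn
    rw [h1, h2]; abel

end CSP

set_option maxHeartbeats 2000000 in
theorem complemented_subspace_of_product_is_product_of_complemented_subspaces_of_countable_subproducts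
    {T : Type u} (B : T → Type u)
    [∀ t, NormedAddCommGroup (B t)] [∀ t, NormedSpace ℝ (B t)] [∀ t, CompleteSpace (B t)]
    (X : Submodule ℝ (∀ t, B t)) (r : (∀ t, B t) →L[ℝ] (∀ t, B t))
    (hrange : Set.range r = (X : Set (∀ t, B t))) (hfix : ∀ x ∈ X, r x = x) :
    ∃ (J : Type u) (Tj : J → Set T)
      (F : ∀ j, Submodule ℝ (∀ t : Tj j, B (t : T))),
      (∀ j, (Tj j).Countable) ∧
      (∀ j, ∃ p : (∀ t : Tj j, B (t : T)) →L[ℝ] (∀ t : Tj j, B (t : T)),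
        Set.range p = (F j : Set (∀ t : Tj j, B (t : T))) ∧ ∀ y ∈ F j, p y = y) ∧
      Nonempty (X ≃L[ℝ] ∀ j, F j) := by
  classical
  -- X is the fixed-point set of the idempotent r
  have hXiff : ∀ x : ∀ t, B t, x ∈ X ↔ r x = x := by
    intro x
    constructor
    · exact hfix x
    · intro h
      have h0 : r x ∈ Set.range ⇑r → r x ∈ X := by rw [hrange]; exact fun h => h
      have h1 := h0 ⟨x, rfl⟩
      rwa [h] at h1
  have hr2 : ∀ x, r (r x) = r x := by
    intro x
    apply hfix
    have h0 : r x ∈ Set.range ⇑r → r x ∈ X := by rw [hrange]; exact fun h => h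
    exact h0 ⟨x, rfl⟩
  -- finite dependency sets
  choose D hD using fun s : T => CSP.findep ((ContinuousLinearMap.proj s).comp r)
  have hD' : ∀ s (x y : ∀ t, B t), (∀ t ∈ D s, x t = y t) → r x s = r y s := by
    intro s x y h
    have h0 : r (x - y) s = 0 := hD s (x - y) (by intro t ht; simp [h t ht])
    rw [map_sub] at h0
    exact sub_eq_zero.mp h0
  -- well order
  obtain ⟨wo, hwf, htri⟩ : ∃ wo : T → T → Prop, WellFounded wo ∧
      ∀ a b : T, wo a b ∨ a = b ∨ wo b a :=
    ⟨WellOrderingRel, IsWellFounded.wf, fun a b => trichotomous a b⟩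
  have hasym : ∀ a b : T, wo a b → ¬ wo b a := fun a b h h' => hwf.asymmetric a b h h'
  have hirr : ∀ a : T, ¬ wo a a := fun a h => hasym a a h h
  -- layer function
  obtain ⟨ℓ, hℓ1, hℓ2⟩ : ∃ ℓ : T → T, (∀ s, s ∈ CSP.cl D (ℓ s)) ∧
      (∀ s t, s ∈ CSP.cl D t → ¬ wo t (ℓ s)) := by
    refine ⟨fun s => hwf.min {t | s ∈ CSP.cl D t} ⟨s, CSP.mem_cl_self D s⟩, ?_, ?_⟩
    · intro s
      exact hwf.min_mem {t | s ∈ CSP.cl D t} ⟨s, CSP.mem_cl_self D s⟩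
    · intro s t h
      exact hwf.not_lt_min {t' | s ∈ CSP.cl D t'} h
  have hdep : ∀ s, ∀ u ∈ D s, ¬ wo (ℓ s) (ℓ u) :=
    fun s u hu => hℓ2 u (ℓ s) (CSP.cl_closed D (hℓ1 s) hu)
  set L : T → Set T := fun j => {u | ℓ u = j} with hLdef
  have hLmem : ∀ (u j : T), u ∈ L j ↔ ℓ u = j := fun u j => Iff.rfl
  have hLcnt : ∀ j, (L j).Countable := by
    intro j
    refine (CSP.cl_countable D j).mono ?_
    intro s hs
    have : ℓ s = j := hs
    have h1 := hℓ1 s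
    rwa [this] at h1
  -- block diagonal part p
  obtain ⟨p, hp⟩ : ∃ p : (∀ t, B t) →L[ℝ] (∀ t, B t),
      ∀ x s, p x s = r (CSP.mask (L (ℓ s)) x) s :=
    ⟨ContinuousLinearMap.pi
      (fun s => (ContinuousLinearMap.proj s).comp (r.comp (CSP.mask (L (ℓ s))))),
     fun x s => rfl⟩
  -- the core computation
  have hcore : ∀ j s, ℓ s = j → ∀ x,
      r (CSP.mask (L j) (r (CSP.mask (L j) x))) s = r (CSP.mask (L j) x) s := by
    intro j s hs x
    set y := CSP.mask (L j) x with hy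
    set z := r y with hz
    have hdepz : ∀ u ∈ D s, ¬ wo j (ℓ u) := by
      intro u hu
      rw [← hs]; exact hdep s u hu
    have hb : ∀ u, wo (ℓ u) j → z u = 0 := by
      intro u hu
      apply hD u
      intro v hv
      by_cases hvL : v ∈ L j
      · exfalso
        have hvj : ℓ v = j := hvL
        have h2 := hdep u v hv
        rw [hvj] at h2
        exact h2 hu
      · simp [hy, CSP.mask_apply, hvL]
    have hsplit : CSP.mask (L j) z
        = CSP.mask {u | ¬ wo j (ℓ u)} z - CSP.mask {u | wo (ℓ u) j} z := by
      funext u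
      simp only [CSP.mask_apply, Pi.sub_apply, Set.mem_setOf_eq]
      rcases htri (ℓ u) j with h | h | h
      · rw [if_neg (fun hL => hirr j (by rwa [(hLmem u j).mp hL] at h)),
          if_pos (hasym _ _ h), if_pos h]
        simp
      · rw [if_pos ((hLmem u j).mpr h), if_pos (by rw [h]; exact hirr j),
          if_neg (by rw [h]; exact hirr j)]
        simp
      · rw [if_neg (fun hL => hirr j (by rwa [(hLmem u j).mp hL] at h)),
          if_neg (fun h' : ¬ wo j (ℓ u) => h' h), if_neg (hasym _ _ h)]
        simp
    have hbb : CSP.mask {u | wo (ℓ u) j} z = 0 := by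
      funext u
      simp only [CSP.mask_apply, Set.mem_setOf_eq, Pi.zero_apply]
      by_cases h : wo (ℓ u) j
      · rw [if_pos h]; exact hb u h
      · rw [if_neg h]
    have ha : r (CSP.mask {u | ¬ wo j (ℓ u)} z) s = z s := by
      have h1 : r (CSP.mask {u | ¬ wo j (ℓ u)} z) s = r z s := by
        apply hD' s
        intro u hu
        simp [CSP.mask_apply, Set.mem_setOf_eq, hdepz u hu]
      rw [h1, hz, hr2]
    rw [hsplit, hbb, sub_zero, ha]
  have hp2 : ∀ x, p (p x) = p x := by
    intro x
    funext s
    have h1 : CSP.mask (L (ℓ s)) (p x) = CSP.mask (L (ℓ s)) (r (CSP.mask (L (ℓ s)) x)) := by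
      funext u
      simp only [CSP.mask_apply]
      by_cases hu : u ∈ L (ℓ s)
      · rw [if_pos hu, if_pos hu, hp x u, (hLmem u (ℓ s)).mp hu]
      · rw [if_neg hu, if_neg hu]
    rw [hp, h1, hcore (ℓ s) s rfl x, ← hp]
  -- strictly triangular part
  obtain ⟨nn, hnn⟩ : ∃ nn : (∀ t, B t) →L[ℝ] (∀ t, B t),
      ∀ x, nn x = (2:ℝ) • p ((r - p) x) - (r - p) x := by
    refine ⟨(((2:ℝ) • p - 1) * (r - p)), fun x => ?_⟩
    simp [ContinuousLinearMap.mul_apply, ContinuousLinearMap.sub_apply,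
      ContinuousLinearMap.smul_apply, ContinuousLinearMap.one_apply]
  have hstrict : ∀ s (x : ∀ t, B t), (∀ u, wo (ℓ u) (ℓ s) → x u = 0) → r x s = p x s := by
    intro s x hx
    rw [hp]
    apply hD' s
    intro u hu
    rcases htri (ℓ u) (ℓ s) with h | h | h
    · simp [CSP.mask_apply, hx u h]
    · rw [CSP.mask_apply, if_pos ((hLmem u (ℓ s)).mpr h)]
    · exact absurd h (hdep s u hu)
  have hstrictnn : ∀ s (x : ∀ t, B t), (∀ u, wo (ℓ u) (ℓ s) → x u = 0) → nn x s = 0 := by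
    intro s x hx
    have h1 : CSP.mask (L (ℓ s)) ((r - p) x) = 0 := by
      funext u
      simp only [CSP.mask_apply, Pi.zero_apply]
      by_cases hu : u ∈ L (ℓ s)
      · rw [if_pos hu]
        have huℓ : ℓ u = ℓ s := hu
        have h2 := hstrict u x (fun v hv => hx v (by rwa [huℓ] at hv))
        simp [ContinuousLinearMap.sub_apply, sub_eq_zero, h2]
      · rw [if_neg hu]
    have h2 : (r - p) x s = 0 := by
      simp [ContinuousLinearMap.sub_apply, sub_eq_zero, hstrict s x hx]
    have h3 : p ((r - p) x) s = 0 := by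
      rw [hp, h1, map_zero]; rfl
    rw [hnn, Pi.sub_apply, Pi.smul_apply, h3, h2, smul_zero, sub_zero]
  choose E hE using fun s : T => CSP.findep ((ContinuousLinearMap.proj s).comp nn)
  have hdepnn : ∀ s (x : ∀ t, B t), (∀ u ∈ E s, wo (ℓ u) (ℓ s) → x u = 0) → nn x s = 0 := by
    intro s x hx
    have hsplit : x = CSP.mask {u | wo (ℓ u) (ℓ s)} x + CSP.mask {u | ¬ wo (ℓ u) (ℓ s)} x := by
      funext u
      simp only [Pi.add_apply, CSP.mask_apply, Set.mem_setOf_eq]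
      by_cases h : wo (ℓ u) (ℓ s) <;> simp [h]
    have ha : nn (CSP.mask {u | wo (ℓ u) (ℓ s)} x) s = 0 := by
      apply hE s
      intro t ht
      simp only [CSP.mask_apply, Set.mem_setOf_eq]
      by_cases h : wo (ℓ t) (ℓ s)
      · rw [if_pos h]; exact hx t ht h
      · rw [if_neg h]
    have hb : nn (CSP.mask {u | ¬ wo (ℓ u) (ℓ s)} x) s = 0 := by
      apply hstrictnn
      intro u hu
      simp [CSP.mask_apply, Set.mem_setOf_eq, hu]
    rw [hsplit, map_add]
    simp [Pi.add_apply, ha, hb]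
  have hdepnn' : ∀ s (x y : ∀ t, B t),
      (∀ u ∈ E s, wo (ℓ u) (ℓ s) → x u = y u) → nn x s = nn y s := by
    intro s x y h
    have h0 := hdepnn s (x - y) (fun u hu hw => by simp [h u hu hw])
    rw [map_sub] at h0
    exact sub_eq_zero.mp h0
  -- local nilpotency
  have hloc : ∀ s, ∃ m, ∀ i ≥ m, ∀ x, ((-nn)^i) x s = 0 := by
    intro s
    refine WellFounded.induction (InvImage.wf ℓ hwf)
      (C := fun s => ∃ m, ∀ i ≥ m, ∀ x : ∀ t, B t, ((-nn)^i) x s = 0) s ?_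
    intro s ih
    have hunif : ∀ (Fi : Finset T), ∃ M, ∀ u ∈ Fi, wo (ℓ u) (ℓ s) →
        ∀ i ≥ M, ∀ x, ((-nn)^i) x u = 0 := by
      intro Fi
      induction Fi using Finset.induction with
      | empty => exact ⟨0, by simp⟩
      | @insert a Fi' ha ihF =>
        obtain ⟨M, hM⟩ := ihF
        by_cases hw : wo (ℓ a) (ℓ s)
        · obtain ⟨m, hm⟩ := ih a hw
          refine ⟨max M m, fun u hu hwu i hi x => ?_⟩
          rcases Finset.mem_insert.mp hu with h | h
          · rw [h]; exact hm i (le_trans (le_max_right _ _) hi) x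
          · exact hM u h hwu i (le_trans (le_max_left _ _) hi) x
        · refine ⟨M, fun u hu hwu => ?_⟩
          rcases Finset.mem_insert.mp hu with h | h
          · exact absurd (h ▸ hwu) hw
          · exact hM u h hwu
    obtain ⟨M, hM⟩ := hunif (E s)
    refine ⟨M + 1, fun i hi x => ?_⟩
    obtain ⟨i', rfl⟩ : ∃ i', i = i' + 1 := ⟨i - 1, by omega⟩
    rw [pow_succ', ContinuousLinearMap.mul_apply]
    have h0 : nn (((-nn)^i') x) s = 0 :=
      hdepnn s _ (fun u hu hw => hM u hu hw i' (by omega) x)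
    rw [ContinuousLinearMap.neg_apply, Pi.neg_apply, h0, neg_zero]
  choose k hk using hloc
  obtain ⟨g, hg⟩ : ∃ g : (∀ t, B t) →L[ℝ] (∀ t, B t),
      ∀ x s, g x s = (∑ j ∈ Finset.range (k s), (-nn)^j) x s :=
    ⟨ContinuousLinearMap.pi
      (fun s => (ContinuousLinearMap.proj s).comp (∑ j ∈ Finset.range (k s), (-nn)^j)),
     fun x s => rfl⟩
  have hgright : ∀ x, g ((1 + nn) x) = x := by
    intro x
    funext s
    rw [hg, ← ContinuousLinearMap.mul_apply, CSP.geomR nn (k s)]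
    simp only [ContinuousLinearMap.sub_apply, ContinuousLinearMap.one_apply, Pi.sub_apply]
    rw [hk s (k s) le_rfl x]
    simp
  have hgA : ∀ (K : ℕ) (x : ∀ t, B t) u, k u ≤ K →
      g x u = (∑ j ∈ Finset.range K, (-nn)^j) x u := by
    intro K x u hK
    rw [hg]
    have hIco := Finset.sum_Ico_eq_sub (fun j => ((-nn)^j : (∀ t, B t) →L[ℝ] (∀ t, B t))) hK
    have hz : (∑ j ∈ Finset.Ico (k u) K, ((-nn)^j)) x u = 0 := by
      rw [ContinuousLinearMap.sum_apply, Finset.sum_apply]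
      exact Finset.sum_eq_zero fun j hj => hk u j (Finset.mem_Ico.mp hj).1 x
    have h1 := congrArg (fun h : (∀ t, B t) →L[ℝ] (∀ t, B t) => h x u) hIco
    simp only [ContinuousLinearMap.sub_apply, Pi.sub_apply] at h1
    rw [hz] at h1
    exact (sub_eq_zero.mp h1.symm).symm
  have hgleft : ∀ x, (1 + nn) (g x) = x := by
    intro x
    funext s
    have hks : k s ≤ (insert s (E s)).sup k := Finset.le_sup (Finset.mem_insert_self s _)
    set K := (insert s (E s)).sup k with hKdef
    have h1 : (1 + nn) (g x) s = g x s + nn (g x) s := by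
      rw [ContinuousLinearMap.add_apply, ContinuousLinearMap.one_apply, Pi.add_apply]
    have h2 : nn (g x) s = nn ((∑ j ∈ Finset.range K, (-nn)^j) x) s := by
      apply hdepnn'
      intro u hu _
      exact hgA K x u (Finset.le_sup (Finset.mem_insert_of_mem hu))
    have h3 : (∑ j ∈ Finset.range K, (-nn)^j) x s + nn ((∑ j ∈ Finset.range K, (-nn)^j) x) s
        = ((1 + nn) * (∑ j ∈ Finset.range K, (-nn)^j)) x s := by
      rw [ContinuousLinearMap.mul_apply, ContinuousLinearMap.add_apply,
        ContinuousLinearMap.one_apply, Pi.add_apply]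
    rw [h1, hgA K x s hks, h2, h3, CSP.geomL nn K]
    rw [ContinuousLinearMap.sub_apply, ContinuousLinearMap.one_apply, Pi.sub_apply,
      hk s K hks x, sub_zero]
  have hSr : ∀ x, (1 + nn) (r x) = p ((1 + nn) x) := by
    intro x
    have e1 : (r - p) (r x) = r x - p (r x) := by
      rw [ContinuousLinearMap.sub_apply, hr2]
    have e2 : p (r x - p (r x)) = 0 := by
      rw [map_sub, hp2, sub_self]
    have l1 : (1 + nn) (r x) = p (r x) := by
      rw [ContinuousLinearMap.add_apply, ContinuousLinearMap.one_apply, hnn, e1, e2,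
        smul_zero, zero_sub]
      abel
    have l2 : p ((1 + nn) x) = p (r x) := by
      rw [ContinuousLinearMap.add_apply, ContinuousLinearMap.one_apply, map_add, hnn,
        map_sub, map_smul, hp2]
      have e3 : p ((r - p) x) = p (r x) - p x := by
        rw [ContinuousLinearMap.sub_apply, map_sub, hp2]
      rw [e3, two_smul]
      abel
    rw [l1, l2]
  -- block projections on the countable subproducts
  obtain ⟨pj, hpj⟩ : ∃ pj : ∀ j : T, ((∀ t : (L j), B (t:T)) →L[ℝ] (∀ t : (L j), B (t:T))),
      ∀ j y t, pj j y t = r (CSP.extC (L j) y) (t : T) :=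
    ⟨fun j => (CSP.resC (L j)).comp (r.comp (CSP.extC (L j))), fun j y t => rfl⟩
  have hpj_res : ∀ j (y : ∀ t : (L j), B (t:T)),
      CSP.resC (L j) (r (CSP.extC (L j) y)) = pj j y := by
    intro j y; funext t; rw [hpj]; rfl
  have hpj_idem : ∀ j y, pj j (pj j y) = pj j y := by
    intro j y
    funext t
    rw [hpj]
    have h1 : CSP.extC (L j) (pj j y) = CSP.mask (L j) (r (CSP.extC (L j) y)) := by
      rw [← hpj_res, CSP.ext_res]
    have h2 : CSP.mask (L j) (CSP.extC (L j) y) = CSP.extC (L j) y := by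
      rw [← CSP.ext_res, CSP.res_ext]
    have h3 := hcore j (t : T) (show ℓ (t : T) = j from t.2) (CSP.extC (L j) y)
    rw [h2] at h3
    rw [h1, h3, hpj]
  have hFfix : ∀ j y, y ∈ LinearMap.range (pj j).toLinearMap → pj j y = y := by
    intro j y hy
    obtain ⟨z, rfl⟩ := hy
    exact hpj_idem j z
  have hpfixres : ∀ j (z : ∀ t, B t), p z = z →
      pj j (CSP.resC (L j) z) = CSP.resC (L j) z := by
    intro j z hz
    funext t
    rw [hpj, CSP.ext_res]
    have ht : ℓ (t : T) = j := t.2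
    have h1 : p z (t : T) = r (CSP.mask (L j) z) (t : T) := by
      rw [hp, ht]
    rw [← h1, hz]
    rfl
  let glue : (∀ j, LinearMap.range (pj j).toLinearMap) → (∀ t, B t) :=
    fun y s => (y (ℓ s) : ∀ t : (L (ℓ s)), B (t:T)) ⟨s, (hLmem s (ℓ s)).mpr rfl⟩
  have hglue_res : ∀ (y : ∀ j, LinearMap.range (pj j).toLinearMap) j,
      CSP.resC (L j) (glue y) = (y j : ∀ t : (L j), B (t:T)) := by
    intro y j
    funext t
    obtain ⟨u, hu⟩ := t
    have hu' : ℓ u = j := hu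
    subst hu'
    rfl
  have hglue_fix : ∀ y, p (glue y) = glue y := by
    intro y
    funext s
    rw [hp, ← CSP.ext_res, hglue_res]
    have h := hFfix (ℓ s) _ (y (ℓ s)).2
    have h2 := congrFun h ⟨s, (hLmem s (ℓ s)).mpr rfl⟩
    rw [hpj] at h2
    exact h2
  refine ⟨T, L, fun j => LinearMap.range (pj j).toLinearMap, hLcnt, ?_, ?_⟩
  · intro j
    exact ⟨pj j, (LinearMap.coe_range (pj j).toLinearMap).symm, fun y hy => hFfix j y hy⟩
  · have hmemF : ∀ (x : X) j,
        CSP.resC (L j) ((1 + nn) (x : ∀ t, B t)) ∈ LinearMap.range (pj j).toLinearMap := by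
      intro x j
      refine ⟨CSP.resC (L j) ((1 + nn) (x : ∀ t, B t)), ?_⟩
      apply hpfixres
      have hr : r (x : ∀ t, B t) = x := (hXiff x).mp x.2
      rw [← hSr, hr]
    have hmemX : ∀ y : ∀ j, LinearMap.range (pj j).toLinearMap, g (glue y) ∈ X := by
      intro y
      rw [hXiff]
      have h1 : (1 + nn) (r (g (glue y))) = (1 + nn) (g (glue y)) := by
        rw [hSr, hgleft]
        exact hglue_fix y
      have h2 := congrArg g h1
      rw [hgright, hgright] at h2
      exact h2
    refine ⟨{ toFun := fun x => fun j => ⟨CSP.resC (L j) ((1 + nn) (x : ∀ t, B t)), hmemF x j⟩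
              map_add' := ?_
              map_smul' := ?_
              invFun := fun y => ⟨g (glue y), hmemX y⟩
              left_inv := ?_
              right_inv := ?_
              continuous_toFun := ?_
              continuous_invFun := ?_ }⟩
    · intro x x'
      funext j
      apply Subtype.ext
      simp [map_add]
    · intro c x
      funext j
      apply Subtype.ext
      simp [map_smul]
    · intro x
      apply Subtype.ext
      have hge : glue (fun j => ⟨CSP.resC (L j) ((1 + nn) (x : ∀ t, B t)), hmemF x j⟩)
          = (1 + nn) (x : ∀ t, B t) := by
        funext s; rfl
      show g (glue (fun j => ⟨CSP.resC (L j) ((1 + nn) (x : ∀ t, B t)), hmemF x j⟩)) = (x : ∀ t, B t)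
      rw [hge, hgright]
    · intro y
      funext j
      apply Subtype.ext
      show CSP.resC (L j) ((1 + nn) (g (glue y))) = _
      rw [hgleft, hglue_res]
    · apply continuous_pi
      intro j
      apply Continuous.subtype_mk
      exact (CSP.resC (L j)).continuous.comp ((1 + nn).continuous.comp continuous_subtype_val)
    · apply Continuous.subtype_mk
      refine g.continuous.comp ?_
      apply continuous_pi
      intro s
      have hc : Continuous fun y : ∀ j, LinearMap.range (pj j).toLinearMap =>
          ((y (ℓ s) : ∀ t : (L (ℓ s)), B (t:T))) :=
        continuous_subtype_val.comp (continuous_apply (ℓ s))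
      exact (continuous_apply _).comp hc
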